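/- (Type–reward equivalence under reward scaling.) For every α ∈ [0,1], every type θ ∈ [0,1], and every fraction f ∈ [0,1], there exists a type θ' ∈ [0, θ] such that Q̃(r(θ'), f) = α · Q̃(r(θ), f). -/
import Mathlib

open Real MeasureTheory Set

noncomputable def xfun (B F c ρ ν dmax : ℝ) (m : ℕ) (R f : ℝ) : ℝ :=
  dmax * F * B * R / (m * f * (c * B * R + F) + ρ * ν * F)

/-- CDF of the normal distribution N(μs, σs²). -/
noncomputable def normCDF (μs σs : ℝ) (y : ℝ) : ℝ :=
  ∫ t in Set.Iic y, (1 / (Real.sqrt (2 * Real.pi) * σs)) * Real.exp (-(t - μs) ^ 2 / (2 * σs ^ 2))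

noncomputable def Qfun (B F c ρ ν dmax : ℝ) (m : ℕ) (μs σs sa sb : ℝ) (R f : ℝ) : ℝ :=
  (normCDF μs σs (xfun B F c ρ ν dmax m R f) - normCDF μs σs sa) /
    (normCDF μs σs sb - normCDF μs σs sa)

/-- The clamped success probability. -/
noncomputable def Qtilde (B F c ρ ν dmax : ℝ) (m : ℕ) (μs σs sa sb : ℝ) (R f : ℝ) : ℝ :=
  max 0 (min 1 (Qfun B F c ρ ν dmax m μs σs sa sb R f))

/-- Spectral efficiency of a type θ. -/
noncomputable def specEff (γmax θ : ℝ) : ℝ := Real.logb 2 (1 + γmax * θ)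

section aux

variable {μs σs : ℝ}

noncomputable def gpdf (μs σs t : ℝ) : ℝ :=
  (1 / (Real.sqrt (2 * Real.pi) * σs)) * Real.exp (-(t - μs) ^ 2 / (2 * σs ^ 2))

lemma gpdf_integrable (hσ : 0 < σs) : Integrable (gpdf μs σs) := by
  have hb : (0:ℝ) < 1 / (2 * σs ^ 2) := by positivity
  have h1 : Integrable (fun t : ℝ => Real.exp (-(1 / (2 * σs ^ 2)) * t ^ 2)) :=
    integrable_exp_neg_mul_sq hb
  have h2 := (h1.comp_sub_right μs).const_mul (1 / (Real.sqrt (2 * Real.pi) * σs))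
  refine h2.congr (Filter.Eventually.of_forall fun t => ?_)
  unfold gpdf
  ring_nf

lemma gpdf_pos (hσ : 0 < σs) (t : ℝ) : 0 < gpdf μs σs t := by
  unfold gpdf
  have : 0 < Real.sqrt (2 * Real.pi) := Real.sqrt_pos.2 (by positivity)
  positivity

lemma normCDF_eq (y : ℝ) : normCDF μs σs y = ∫ t in Set.Iic y, gpdf μs σs t := rfl

lemma normCDF_continuous (hσ : 0 < σs) : Continuous (normCDF μs σs) := by
  have hint := gpdf_integrable (μs := μs) hσ
  have h : ∀ y : ℝ, normCDF μs σs y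
      = normCDF μs σs 0 + ∫ t in (0:ℝ)..y, gpdf μs σs t := by
    intro y
    rw [normCDF_eq, normCDF_eq]
    have := intervalIntegral.integral_Iic_sub_Iic (f := gpdf μs σs) (μ := volume)
      hint.integrableOn hint.integrableOn (a := 0) (b := y)
    linarith [this]
  rw [funext h]
  exact continuous_const.add (intervalIntegral.continuous_primitive
      (fun a b => hint.intervalIntegrable) 0)

lemma normCDF_strict (hσ : 0 < σs) {a b : ℝ} (hab : a < b) :
    normCDF μs σs a < normCDF μs σs b := by
  have hint := gpdf_integrable (μs := μs) hσ
  have hdiff : normCDF μs σs b - normCDF μs σs a = ∫ t in a..b, gpdf μs σs t := by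
    rw [normCDF_eq, normCDF_eq]
    exact intervalIntegral.integral_Iic_sub_Iic hint.integrableOn hint.integrableOn
  have hpos : 0 < ∫ t in a..b, gpdf μs σs t :=
    intervalIntegral.intervalIntegral_pos_of_pos
      (hint.intervalIntegrable) (fun t => gpdf_pos hσ t) hab
  linarith

lemma normCDF_mono (hσ : 0 < σs) : Monotone (normCDF μs σs) := by
  intro a b hab
  rcases eq_or_lt_of_le hab with rfl | h
  · exact le_refl _
  · exact (normCDF_strict hσ h).le

end aux

theorem stmt13 (B F c ρ ν dmax : ℝ) (m : ℕ)
    (hB : 0 < B) (hF : 0 < F) (hc : 0 < c) (hρ : 0 < ρ) (hν : 0 < ν) (hd : 0 < dmax)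
    (hm : 0 < m) (μs σs sa sb : ℝ) (hσ : 0 < σs) (hsa : 0 < sa) (hab : sa < sb) (γmax : ℝ) (hγ : 0 < γmax)
    (α θ f : ℝ) (hα : α ∈ Set.Icc (0 : ℝ) 1) (hθ : θ ∈ Set.Icc (0 : ℝ) 1)
    (hf : f ∈ Set.Icc (0 : ℝ) 1) :
    ∃ θ' ∈ Set.Icc 0 θ,
      Qtilde B F c ρ ν dmax m μs σs sa sb (specEff γmax θ') f =
        α * Qtilde B F c ρ ν dmax m μs σs sa sb (specEff γmax θ) f := by
  set h : ℝ → ℝ := fun t => Qtilde B F c ρ ν dmax m μs σs sa sb (specEff γmax t) f with hh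
  -- continuity of h on Icc 0 θ
  have hcont : ContinuousOn h (Icc 0 θ) := by
    have hspec : ContinuousOn (fun t => specEff γmax t) (Icc 0 θ) := by
      unfold specEff Real.logb
      apply ContinuousOn.div_const
      apply ContinuousOn.log (by fun_prop)
      intro t ht
      have := ht.1
      nlinarith
    have hspec_nonneg : ∀ t ∈ Icc 0 θ, 0 ≤ specEff γmax t := by
      intro t ht
      unfold specEff
      apply Real.logb_nonneg one_lt_two
      nlinarith [ht.1]
    have hx : ContinuousOn (fun t => xfun B F c ρ ν dmax m (specEff γmax t) f) (Icc 0 θ) := by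
      unfold xfun
      apply ContinuousOn.div (by fun_prop) (by fun_prop)
      intro t ht
      have hR := hspec_nonneg t ht
      have h1 : 0 ≤ (m:ℝ) * f * (c * B * specEff γmax t + F) := by
        apply mul_nonneg (mul_nonneg (Nat.cast_nonneg m) hf.1)
        nlinarith [mul_nonneg (mul_nonneg hc.le hB.le) hR]
      have h2 : 0 < ρ * ν * F := by positivity
      intro habs
      linarith
    have hQ : ContinuousOn (fun t => Qfun B F c ρ ν dmax m μs σs sa sb (specEff γmax t) f)
        (Icc 0 θ) := by
      unfold Qfun
      apply ContinuousOn.div_const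
      exact ((normCDF_continuous hσ).comp_continuousOn hx).sub continuousOn_const
    unfold Qtilde at hh
    rw [hh]
    exact (continuous_const.max (continuous_const.min continuous_id)).comp_continuousOn hQ
  -- h 0 = 0
  have h0 : h 0 = 0 := by
    have hden : 0 < normCDF μs σs sb - normCDF μs σs sa :=
      sub_pos.2 (normCDF_strict hσ hab)
    have hse : specEff γmax 0 = 0 := by simp [specEff]
    have hx0 : xfun B F c ρ ν dmax m 0 f = 0 := by simp [xfun]
    have hnum : normCDF μs σs (xfun B F c ρ ν dmax m (specEff γmax 0) f) - normCDF μs σs sa ≤ 0 := by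
      rw [hse, hx0]
      have := (normCDF_strict (μs := μs) hσ hsa)
      linarith
    have hQ0 : Qfun B F c ρ ν dmax m μs σs sa sb (specEff γmax 0) f ≤ 0 := by
      unfold Qfun
      exact div_nonpos_of_nonpos_of_nonneg hnum hden.le
    simp only [hh, Qtilde]
    rw [min_eq_right (le_trans hQ0 zero_le_one), max_eq_left hQ0]
  -- target value between h 0 and h θ
  have hθnn : 0 ≤ h θ := le_max_left _ _
  have htarget : α * h θ ∈ Icc (h 0) (h θ) := by
    constructor
    · rw [h0]; exact mul_nonneg hα.1 hθnn
    · nlinarith [hα.1, hα.2]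
  have := intermediate_value_Icc hθ.1 hcont htarget
  obtain ⟨θ', hθ', hval⟩ := this
  exact ⟨θ', hθ', hval⟩
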